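/- Let G be a finite abelian group of odd order n. Then there exist n complete mappings σ_0, σ_1, …, σ_{n-1} of G that are pairwise disjoint, i.e., σ_j(g) ≠ σ_k(g) for all g ∈ G whenever j ≠ k; moreover, at least φ(n) of these complete mappings are cyclic permutations of G (where φ is Euler's totient function). -/

import Mathlib

open Equiv Function Finset

section helpers

/-- Periodicity of permutation powers at a point. -/
lemma perm_pow_mod {α : Type*} (τ : Equiv.Perm α) (x : α) {d : ℕ} (hd : 0 < d)
    (hx : (τ ^ d) x = x) : ∀ k : ℕ, (τ ^ k) x = (τ ^ (k % d)) x := by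
  intro k
  induction k using Nat.strong_induction_on with
  | _ k ih =>
    rcases lt_or_ge k d with h | h
    · rw [Nat.mod_eq_of_lt h]
    · have h1 : k = (k - d) + d := by omega
      rw [h1, pow_add, Equiv.Perm.mul_apply, hx, ih (k - d) (by omega), Nat.add_mod_right]

/-- Structure of a transitive orbit. -/
lemma orbit_struct {G : Type*} [Fintype G] (τ : Equiv.Perm G) (x : G)
    (h : ∀ y, ∃ k : ℕ, (τ ^ k) x = y) :
    (τ ^ Fintype.card G) x = x ∧
    (∀ y, ∃ k < Fintype.card G, (τ ^ k) x = y) ∧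
    (∀ i j : ℕ, i < Fintype.card G → j < Fintype.card G →
      (τ ^ i) x = (τ ^ j) x → i = j) := by
  classical
  -- a positive period exists
  have hper : ∃ d : ℕ, 0 < d ∧ (τ ^ d) x = x := by
    have hcard : Fintype.card G < Fintype.card (Fin (Fintype.card G + 1)) := by simp
    obtain ⟨a, b, hab, he⟩ :=
      Fintype.exists_ne_map_eq_of_card_lt (fun j : Fin (Fintype.card G + 1) => (τ ^ (j : ℕ)) x)
        hcard
    have key : ∀ (i j : ℕ), i < j → (τ ^ i) x = (τ ^ j) x → ∃ d, 0 < d ∧ (τ ^ d) x = x := by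
      intro i j hij hexy
      refine ⟨j - i, by omega, ?_⟩
      have : (τ ^ i) ((τ ^ (j - i)) x) = (τ ^ i) x := by
        rw [← Equiv.Perm.mul_apply, ← pow_add]
        rw [show i + (j - i) = j by omega]
        exact hexy.symm
      exact (Equiv.injective _) this
    rcases lt_or_gt_of_ne (fun hh : (a : ℕ) = (b : ℕ) => hab (Fin.ext hh)) with hlt | hlt
    · exact key a b hlt he
    · exact key b a hlt he.symm
  set d := Nat.find hper with hdd
  obtain ⟨hd0, hdx⟩ : 0 < d ∧ (τ ^ d) x = x := Nat.find_spec hper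
  have hmin : ∀ e : ℕ, e < d → ¬(0 < e ∧ (τ ^ e) x = x) := fun e he => Nat.find_min hper he
  have hmod := perm_pow_mod τ x hd0 hdx
  -- surjectivity with bound d
  have hsurj : ∀ y, ∃ k < d, (τ ^ k) x = y := by
    intro y
    obtain ⟨k, hk⟩ := h y
    exact ⟨k % d, Nat.mod_lt _ hd0, by rw [← hmod]; exact hk⟩
  -- injectivity below d
  have hinj : ∀ i j : ℕ, i < d → j < d → (τ ^ i) x = (τ ^ j) x → i = j := by
    have key : ∀ i j : ℕ, i < j → j < d → (τ ^ i) x = (τ ^ j) x → False := by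
      intro i j hij hjd hexy
      have : (τ ^ i) ((τ ^ (j - i)) x) = (τ ^ i) x := by
        rw [← Equiv.Perm.mul_apply, ← pow_add, show i + (j - i) = j by omega]
        exact hexy.symm
      have h2 : (τ ^ (j - i)) x = x := (Equiv.injective _) this
      exact hmin (j - i) (by omega) ⟨by omega, h2⟩
    intro i j hi hj hexy
    rcases lt_trichotomy i j with hh | hh | hh
    · exact absurd (key i j hh hj hexy) (by simp)
    · exact hh
    · exact absurd (key j i hh hi hexy.symm) (by simp)
  -- d = card G
  have hbij : Function.Bijective (fun j : Fin d => (τ ^ (j : ℕ)) x) := by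
    constructor
    · intro a b hab
      exact Fin.ext (hinj a b a.isLt b.isLt hab)
    · intro y
      obtain ⟨k, hk, hky⟩ := hsurj y
      exact ⟨⟨k, hk⟩, hky⟩
  have hcard : d = Fintype.card G := by
    have := Fintype.card_of_bijective hbij
    simpa using this
  rw [← hcard]
  exact ⟨hdx, hsurj, hinj⟩

/-- Solve `l • u = t` in `ZMod q` for a unit `u`. -/
lemma zmod_exists_nsmul {q : ℕ} [NeZero q] {u : ZMod q} (hu : IsUnit u) (t : ZMod q) :
    ∃ l : ℕ, (l : ZMod q) * u = t := by
  obtain ⟨w, rfl⟩ := hu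
  refine ⟨(t * ↑w⁻¹).val, ?_⟩
  rw [ZMod.natCast_rightInverse _]
  exact Units.inv_mul_cancel_right t w

lemma addRight_pow {H : Type*} [AddCommGroup H] (b : H) (k : ℕ) (x : H) :
    ((Equiv.addRight b) ^ k) x = x + k • b := by
  induction k generalizing x with
  | zero => simp
  | succ k ih =>
    rw [pow_succ, Equiv.Perm.mul_apply]
    show ((Equiv.addRight b) ^ k) (x + b) = x + (k + 1) • b
    rw [ih, succ_nsmul]
    abel

end helpers
section goodfam

/-- Existence of `card G` pairwise disjoint complete mappings with `φ (card G)`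
cyclic ones, indexed by `G` itself. -/
def GoodFam (G : Type*) [AddCommGroup G] [Fintype G] : Prop :=
  ∃ σ : G → Equiv.Perm G,
    (∀ i, Function.Bijective (fun g : G => g + σ i g)) ∧
    (∀ i j : G, i ≠ j → ∀ g : G, σ i g ≠ σ j g) ∧
    ∃ S : Finset G, (Fintype.card G).totient ≤ S.card ∧
      ∀ i ∈ S, ∃ x : G, ∀ y : G, ∃ k : ℕ, ((σ i) ^ k) x = y

lemma conj_pow_apply {G H : Type*} (e : G ≃ H) (p : Equiv.Perm G) (k : ℕ) (x : H) :
    (((e.symm.trans p).trans e : Equiv.Perm H) ^ k) x = e ((p ^ k) (e.symm x)) := by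
  induction k generalizing x with
  | zero => simp
  | succ k ih =>
    rw [pow_succ, Equiv.Perm.mul_apply, pow_succ, Equiv.Perm.mul_apply, ih]
    simp [Equiv.trans_apply]

lemma GoodFam.transfer {G H : Type*} [AddCommGroup G] [Fintype G]
    [AddCommGroup H] [Fintype H] (e : G ≃+ H) (hG : GoodFam G) : GoodFam H := by
  classical
  obtain ⟨σ, hcomp, hdis, S, hS, hcyc⟩ := hG
  refine ⟨fun i => (e.toEquiv.symm.trans (σ (e.symm i))).trans e.toEquiv, ?_, ?_, ?_⟩
  · intro i
    have : (fun g : H => g + ((e.toEquiv.symm.trans (σ (e.symm i))).trans e.toEquiv) g)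
        = (⇑e) ∘ (fun g : G => g + σ (e.symm i) g) ∘ (⇑e.symm) := by
      funext g
      simp only [Function.comp_apply, Equiv.trans_apply, AddEquiv.toEquiv_eq_coe,
        AddEquiv.coe_toEquiv, AddEquiv.coe_toEquiv_symm, map_add]
      rw [e.apply_symm_apply]
    rw [this]
    exact (EquivLike.bijective e).comp ((hcomp _).comp (EquivLike.bijective e.symm))
  · intro i j hij g
    have h1 : e.symm i ≠ e.symm j := fun hh => hij (by simpa using congrArg e hh)
    simp only [Equiv.trans_apply, AddEquiv.toEquiv_eq_coe, AddEquiv.coe_toEquiv]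
    intro hh
    exact hdis _ _ h1 (e.symm g) (e.injective hh)
  · refine ⟨S.image e, ?_, ?_⟩
    · rw [Finset.card_image_of_injective _ e.injective]
      rwa [Fintype.card_congr e.toEquiv] at hS
    · intro i hi
      obtain ⟨g, hg, rfl⟩ := Finset.mem_image.mp hi
      obtain ⟨x, hx⟩ := hcyc g hg
      refine ⟨e x, fun y => ?_⟩
      obtain ⟨k, hk⟩ := hx (e.symm y)
      refine ⟨k, ?_⟩
      have := conj_pow_apply (e.toEquiv) (σ (e.symm (e g))) k (e x)
      simp only [AddEquiv.toEquiv_eq_coe, AddEquiv.coe_toEquiv] at this ⊢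
      rw [this]
      simp only [AddEquiv.symm_apply_apply, AddEquiv.coe_toEquiv_symm, Equiv.symm_apply_apply]
      rw [hk]
      exact e.apply_symm_apply y

/-- Base case: cyclic groups `ZMod q` for odd `q > 0`, via translations. -/
lemma goodFam_zmod (q : ℕ) [NeZero q] (hodd : Odd q) : GoodFam (ZMod q) := by
  classical
  have h2 : IsUnit (2 : ZMod q) := by
    have hco : Nat.Coprime 2 q := by
      rw [Nat.prime_two.coprime_iff_not_dvd]
      rintro ⟨c, hc⟩
      obtain ⟨d, hd⟩ := hodd
      omega
    simpa using (ZMod.isUnit_iff_coprime 2 q).mpr hco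
  refine ⟨fun b => Equiv.addRight b, ?_, ?_, ?_⟩
  · intro b
    rw [Finite.injective_iff_bijective.symm]
    intro g1 g2 hg
    simp only [Equiv.coe_addRight] at hg
    have : (2 : ZMod q) * g1 = 2 * g2 := by ring_nf; linear_combination hg
    exact h2.mul_right_injective this
  · intro i j hij g
    simp only [Equiv.coe_addRight]
    exact fun hh => hij (by exact add_left_cancel hh)
  · refine ⟨Finset.univ.filter (fun b => IsUnit b), ?_, ?_⟩
    · have h1 : (Finset.univ.filter (fun b : ZMod q => IsUnit b)).card
          = Fintype.card {b : ZMod q // IsUnit b} := (Fintype.card_subtype _).symm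
      have h2 : Fintype.card {b : ZMod q // IsUnit b} = Fintype.card (ZMod q)ˣ := by
        refine (Fintype.card_congr ?_).symm
        exact ⟨fun u => ⟨(u : ZMod q), u.isUnit⟩,
          fun b => b.2.unit, fun u => Units.ext rfl, fun b => Subtype.ext rfl⟩
      rw [h1, h2, ZMod.card_units_eq_totient, ZMod.card]
    · intro b hb
      have hbu : IsUnit b := (Finset.mem_filter.mp hb).2
      refine ⟨0, fun y => ?_⟩
      obtain ⟨l, hl⟩ := zmod_exists_nsmul hbu y
      refine ⟨l, ?_⟩
      rw [addRight_pow, zero_add, nsmul_eq_mul, hl]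

end goodfam
section coprime

lemma prodCongr_pow_apply {A B : Type*} (p : Equiv.Perm A) (q : Equiv.Perm B)
    (k : ℕ) (x : A × B) :
    ((p.prodCongr q) ^ k) x = ((p ^ k) x.1, (q ^ k) x.2) := by
  induction k generalizing x with
  | zero => simp
  | succ k ih =>
    rw [pow_succ, Equiv.Perm.mul_apply, pow_succ, pow_succ,
      Equiv.Perm.mul_apply, Equiv.Perm.mul_apply]
    rw [show (p.prodCongr q) x = (p x.1, q x.2) from rfl]
    exact ih (p x.1, q x.2)

lemma goodFam_prod_coprime {A B : Type*} [AddCommGroup A] [Fintype A]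
    [AddCommGroup B] [Fintype B]
    (hco : Nat.Coprime (Fintype.card A) (Fintype.card B))
    (hA : GoodFam A) (hB : GoodFam B) : GoodFam (A × B) := by
  classical
  obtain ⟨σA, hcompA, hdisA, SA, hSA, hcycA⟩ := hA
  obtain ⟨σB, hcompB, hdisB, SB, hSB, hcycB⟩ := hB
  refine ⟨fun ij => (σA ij.1).prodCongr (σB ij.2), ?_, ?_, ?_⟩
  · intro ij
    have : (fun g : A × B => g + ((σA ij.1).prodCongr (σB ij.2)) g)
        = Prod.map (fun a => a + σA ij.1 a) (fun b => b + σB ij.2 b) := rfl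
    rw [this]
    exact (hcompA ij.1).prodMap (hcompB ij.2)
  · rintro ⟨i, j⟩ ⟨i', j'⟩ hne g heq
    have h1 : σA i g.1 = σA i' g.1 ∧ σB j g.2 = σB j' g.2 := by
      constructor
      · exact congrArg Prod.fst heq
      · exact congrArg Prod.snd heq
    by_cases hii : i = i'
    · subst hii
      have hjj : j ≠ j' := fun hh => hne (by rw [hh])
      exact hdisB j j' hjj g.2 h1.2
    · exact hdisA i i' hii g.1 h1.1
  · refine ⟨SA ×ˢ SB, ?_, ?_⟩
    · rw [Finset.card_product, Fintype.card_prod, Nat.totient_mul hco]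
      exact Nat.mul_le_mul hSA hSB
    · rintro ⟨i, j⟩ hij
      obtain ⟨hiS, hjS⟩ := Finset.mem_product.mp hij
      obtain ⟨xA, hxA⟩ := hcycA i hiS
      obtain ⟨xB, hxB⟩ := hcycB j hjS
      obtain ⟨hpA, hsA, -⟩ := orbit_struct (σA i) xA hxA
      obtain ⟨hpB, hsB, -⟩ := orbit_struct (σB j) xB hxB
      have hcardA : 0 < Fintype.card A := Fintype.card_pos
      have hcardB : 0 < Fintype.card B := Fintype.card_pos
      refine ⟨(xA, xB), fun y => ?_⟩
      obtain ⟨k1, -, hk1⟩ := hsA y.1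
      obtain ⟨k2, -, hk2⟩ := hsB y.2
      obtain ⟨k, hkA, hkB⟩ := Nat.chineseRemainder hco k1 k2
      refine ⟨k, ?_⟩
      rw [prodCongr_pow_apply]
      have e1 : ((σA i) ^ k) xA = y.1 := by
        rw [perm_pow_mod (σA i) xA hcardA hpA k, hkA,
          ← perm_pow_mod (σA i) xA hcardA hpA k1, hk1]
      have e2 : ((σB j) ^ k) xB = y.2 := by
        rw [perm_pow_mod (σB j) xB hcardB hpB k, hkB,
          ← perm_pow_mod (σB j) xB hcardB hpB k2, hk2]
      rw [e1, e2]

end coprime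
section extend

lemma totient_mul_pow {p m : ℕ} (hp : p.Prime) (hd : p ∣ m) (a : ℕ) :
    (m * p ^ a).totient = m.totient * p ^ a := by
  induction a with
  | zero => simp
  | succ a ih =>
    have h1 : m * p ^ (a + 1) = p * (m * p ^ a) := by ring
    rw [h1, Nat.totient_mul_of_prime_of_dvd hp (hd.mul_right _), ih]
    ring

lemma goodFam_extend {A : Type*} [AddCommGroup A] [Fintype A] (p a : ℕ) [NeZero (p ^ a)]
    (hp : p.Prime) (hp2 : p ≠ 2) (ha : 0 < a)
    (hdvd : p ∣ Fintype.card A) (hA : GoodFam A) : GoodFam (A × ZMod (p ^ a)) := by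
  classical
  obtain ⟨σA, hcompA, hdisA, SA, hSA, hcycA⟩ := hA
  set q : ℕ := p ^ a with hq
  set m : ℕ := Fintype.card A with hm
  have hqodd : Odd q := (hp.odd_of_ne_two hp2).pow
  have h2u : IsUnit (2 : ZMod q) := by
    have hco : Nat.Coprime 2 q := by
      rw [Nat.prime_two.coprime_iff_not_dvd]
      rintro ⟨c, hc⟩
      obtain ⟨d, hd⟩ := hqodd
      omega
    simpa using (ZMod.isUnit_iff_coprime 2 q).mpr hco
  -- the indicator function
  set f : A → ZMod q := fun h => if h = 0 then 1 else 0 with hf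
  -- the family
  set σ : A × ZMod q → Equiv.Perm (A × ZMod q) := fun ib =>
    Equiv.prodShear (σA ib.1) (fun h => Equiv.addRight (ib.2 + f h)) with hσ
  have happ : ∀ (i : A) (b : ZMod q) (h : A) (c : ZMod q),
      σ (i, b) (h, c) = (σA i h, c + (b + f h)) := fun _ _ _ _ => rfl
  refine ⟨σ, ?_, ?_, ?_⟩
  · intro ib
    rw [Finite.injective_iff_bijective.symm]
    rintro ⟨h1, c1⟩ ⟨h2, c2⟩ heq
    simp only [Prod.ext_iff, Prod.fst_add, Prod.snd_add] at heq
    obtain ⟨heq1, heq2⟩ := heq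
    rw [show ((σ ib) (h1, c1)).1 = σA ib.1 h1 from rfl, show ((σ ib) (h2, c2)).1 = σA ib.1 h2 from rfl] at heq1
    rw [show ((σ ib) (h1, c1)).2 = c1 + (ib.2 + f h1) from rfl, show ((σ ib) (h2, c2)).2 = c2 + (ib.2 + f h2) from rfl] at heq2
    have hh : h1 = h2 := (hcompA ib.1).injective heq1
    subst hh
    have hcc : (2 : ZMod q) * c1 = 2 * c2 := by
      have := heq2
      ring_nf
      ring_nf at this
      linear_combination this
    exact Prod.ext rfl (h2u.mul_right_injective hcc)
  · rintro ⟨i, b⟩ ⟨i', b'⟩ hne ⟨h, c⟩ heq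
    simp only [happ, Prod.mk.injEq] at heq
    by_cases hii : i = i'
    · subst hii
      have hbb : b ≠ b' := fun hh => hne (by rw [hh])
      have h1 : b + f h = b' + f h := add_left_cancel heq.2
      exact hbb (add_right_cancel h1)
    · exact hdisA i i' hii h heq.1
  · refine ⟨SA ×ˢ Finset.univ, ?_, ?_⟩
    · rw [Finset.card_product, Fintype.card_prod, ZMod.card, Finset.card_univ, ZMod.card]
      rw [← hm, ← hq, totient_mul_pow hp hdvd a, ← hq]
      exact Nat.mul_le_mul_right _ hSA
    · rintro ⟨i, b⟩ hib
      have hiS : i ∈ SA := (Finset.mem_product.mp hib).1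
      obtain ⟨x0, hx0⟩ := hcycA i hiS
      set τ : Equiv.Perm A := σA i with hτ
      obtain ⟨hper, hsur, hinj⟩ := orbit_struct τ x0 hx0
      rw [← hm] at hper hsur hinj
      have hm0 : 0 < m := Fintype.card_pos
      -- iteration formula
      set w : ℕ → ZMod q := fun k => (k : ZMod q) * b + ∑ j ∈ Finset.range k, f ((τ ^ j) x0)
        with hw
      have hit : ∀ (k : ℕ) (c : ZMod q), ((σ (i, b)) ^ k) (x0, c) = ((τ ^ k) x0, c + w k) := by
        intro k c
        induction k with
        | zero => simp [hw]
        | succ k ih =>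
          rw [pow_succ', Equiv.Perm.mul_apply, ih]
          rw [show (σ (i, b)) ((τ ^ k) x0, c + w k)
            = (τ ((τ ^ k) x0), (c + w k) + (b + f ((τ ^ k) x0))) from rfl]
          refine Prod.ext ?_ ?_
          · rw [pow_succ', Equiv.Perm.mul_apply]
          · show c + w k + (b + f ((τ ^ k) x0)) = c + w (k + 1)
            simp only [hw, Finset.sum_range_succ]
            push_cast
            ring
      -- the sum over one period is 1
      have hsum1 : ∑ j ∈ Finset.range m, f ((τ ^ j) x0) = 1 := by
        have : ∑ j ∈ Finset.range m, f ((τ ^ j) x0) = ∑ h ∈ Finset.univ, f h := by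
          refine Finset.sum_bij (fun j _ => (τ ^ j) x0) (fun _ _ => Finset.mem_univ _)
            ?_ ?_ (fun _ _ => rfl)
          · intro j1 hj1 j2 hj2 hee
            exact hinj j1 j2 (Finset.mem_range.mp hj1) (Finset.mem_range.mp hj2) hee
          · intro h _
            obtain ⟨k, hk, hkh⟩ := hsur h
            exact ⟨k, Finset.mem_range.mpr hk, hkh⟩
        rw [this, hf]
        simp
      -- periodicity of powers at multiples of m
      have hml : ∀ l : ℕ, ((τ ^ (m * l))) x0 = x0 := by
        intro l
        induction l with
        | zero => simp
        | succ l ih =>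
          have : m * (l + 1) = m * l + m := by ring
          rw [this, pow_add, Equiv.Perm.mul_apply, hper, ih]
      set u : ZMod q := (m : ZMod q) * b + 1 with hu
      have hwml : ∀ l : ℕ, w (m * l) = (l : ZMod q) * u := by
        intro l
        induction l with
        | zero => simp [hw]
        | succ l ih =>
          have h1 : m * (l + 1) = m * l + m := by ring
          rw [h1]
          have h2 : ∑ j ∈ Finset.range (m * l + m), f ((τ ^ j) x0)
              = ∑ j ∈ Finset.range (m * l), f ((τ ^ j) x0)
              + ∑ j ∈ Finset.range m, f ((τ ^ (m * l + j)) x0) := Finset.sum_range_add _ _ _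
          have h3 : ∀ j : ℕ, (τ ^ (m * l + j)) x0 = (τ ^ j) x0 := by
            intro j
            rw [Nat.add_comm, pow_add, Equiv.Perm.mul_apply, hml]
          have h4 : ∑ j ∈ Finset.range m, f ((τ ^ (m * l + j)) x0)
              = ∑ j ∈ Finset.range m, f ((τ ^ j) x0) := by
            refine Finset.sum_congr rfl fun j _ => by rw [h3]
          simp only [hw] at ih ⊢
          rw [h2, h4, hsum1]
          have h5 : ((m * l : ℕ) : ZMod q) * b
              + ∑ j ∈ Finset.range (m * l), f ((τ ^ j) x0) = (l : ZMod q) * u := ih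
          push_cast at h5 ⊢
          rw [hu]
          linear_combination h5
      -- u is a unit
      have hu_unit : IsUnit u := by
        have hvu : ((m * b.val + 1 : ℕ) : ZMod q) = u := by
          push_cast
          rw [ZMod.natCast_rightInverse b, hu]
        rw [← hvu]
        rw [ZMod.isUnit_iff_coprime]
        refine Nat.Coprime.pow_right a ?_
        have hnd : ¬ p ∣ (m * b.val + 1) := by
          intro hdv
          have h1 : p ∣ m * b.val := hdvd.mul_right _
          have h2 : p ∣ 1 := by simpa using Nat.dvd_sub hdv h1
          exact hp.one_lt.ne' (Nat.dvd_one.mp h2)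
        exact Nat.coprime_comm.mp ((hp.coprime_iff_not_dvd).mpr hnd)
      -- conclude cyclicity
      refine ⟨(x0, 0), fun y => ?_⟩
      obtain ⟨j, hj⟩ := hx0 y.1
      obtain ⟨l, hl⟩ := zmod_exists_nsmul hu_unit (y.2 - w j)
      refine ⟨j + m * l, ?_⟩
      rw [pow_add, Equiv.Perm.mul_apply, hit (m * l) 0, hml l, zero_add, hwml l,
        hit j ((l : ZMod q) * u)]
      refine Prod.ext ?_ ?_
      · exact hj
      · show (l : ZMod q) * u + w j = y.2
        rw [hl]
        ring

end extend
section pi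

lemma goodFam_of_subsingleton (G : Type*) [AddCommGroup G] [Fintype G] [Subsingleton G] :
    GoodFam G := by
  refine ⟨fun _ => 1, ?_, ?_, ?_⟩
  · intro i
    rw [Finite.injective_iff_bijective.symm]
    intro a b _
    exact Subsingleton.elim a b
  · intro i j hij
    exact absurd (Subsingleton.elim i j) hij
  · refine ⟨Finset.univ, ?_, ?_⟩
    · have h1 : Fintype.card G = 1 :=
        Fintype.card_eq_one_iff.mpr ⟨0, fun y => Subsingleton.elim y 0⟩
      rw [Finset.card_univ, h1]
      simp
    · intro i _
      exact ⟨0, fun y => ⟨0, Subsingleton.elim _ _⟩⟩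

/-- Splitting off the first coordinate of a finite product of groups. -/
def piSplitAddEquiv {r : ℕ} (β : Fin (r + 1) → Type*) [∀ i, AddCommGroup (β i)] :
    (∀ i, β i) ≃+ (∀ i : Fin r, β i.succ) × β 0 where
  toFun f := (fun i => f i.succ, f 0)
  invFun x := Fin.cons x.2 x.1
  left_inv f := by
    ext i
    refine Fin.cases ?_ ?_ i
    · simp
    · intro j
      simp
  right_inv x := by
    refine Prod.ext ?_ ?_
    · funext i
      simp
    · simp
  map_add' f g := rfl

lemma goodFam_pi : ∀ (r : ℕ) (q : Fin r → ℕ) [∀ i, NeZero (q i)], (∀ i, Odd (q i)) →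
    (∀ i, ∃ p e : ℕ, p.Prime ∧ q i = p ^ e) → GoodFam (∀ i, ZMod (q i)) := by
  intro r
  induction r with
  | zero =>
    intro q _ _ _
    exact goodFam_of_subsingleton _
  | succ r ih =>
    intro q hnz hodd hpp
    have hX : GoodFam (∀ i : Fin r, ZMod (q i.succ)) :=
      @ih (fun i => q i.succ) (fun i => hnz i.succ) (fun i => hodd i.succ) (fun i => hpp i.succ)
    obtain ⟨p, e, hp, hqe⟩ := hpp 0
    have hkey : ∀ (n : ℕ) [NeZero n], n = p ^ e → Odd n →
        GoodFam ((∀ i : Fin r, ZMod (q i.succ)) × ZMod n) := by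
      intro n _ hn hoddn
      subst hn
      rcases Nat.eq_zero_or_pos e with he | he
      · subst he
        haveI : Unique (ZMod (p ^ 0)) := by rw [pow_zero]; infer_instance
        exact hX.transfer (AddEquiv.prodUnique).symm
      · have hoddq : Odd (p ^ e) := hoddn
        have hp2 : p ≠ 2 := by
          rintro rfl
          have h2 : (2 : ℕ) ∣ 2 ^ e := dvd_pow_self 2 he.ne'
          obtain ⟨c, hc⟩ := h2
          obtain ⟨d, hd⟩ := hoddq
          omega
        by_cases hdvd : p ∣ Fintype.card (∀ i : Fin r, ZMod (q i.succ))
        · exact goodFam_extend p e hp hp2 he hdvd hX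
        · have hco : Nat.Coprime (Fintype.card (∀ i : Fin r, ZMod (q i.succ)))
              (Fintype.card (ZMod (p ^ e))) := by
            rw [ZMod.card]
            exact Nat.Coprime.pow_right e ((hp.coprime_iff_not_dvd).mpr hdvd).symm
          exact goodFam_prod_coprime hco hX (goodFam_zmod (p ^ e) hoddq)
    exact (hkey (q 0) hqe (hodd 0)).transfer (piSplitAddEquiv (fun i => ZMod (q i))).symm

end pi
section main

open scoped DirectSum

lemma goodFam_of_odd (G : Type*) [AddCommGroup G] [Fintype G]
    (hodd : Odd (Fintype.card G)) : GoodFam G := by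
  classical
  obtain ⟨ι, hι, pp, hpp, ee, ⟨eG⟩⟩ := AddCommGroup.equiv_directSum_zmod_of_finite G
  haveI := hι
  set r : ℕ := Fintype.card ι with hr
  set eι : ι ≃ Fin r := Fintype.equivFin ι with heι
  set q : Fin r → ℕ := fun j => pp (eι.symm j) ^ ee (eι.symm j) with hqdef
  haveI hnz : ∀ j, NeZero (q j) := fun j => ⟨pow_ne_zero _ (hpp _).pos.ne'⟩
  haveI hnz' : ∀ i : ι, NeZero (pp i ^ ee i) := fun i => ⟨pow_ne_zero _ (hpp _).pos.ne'⟩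
  -- direct sum to pi
  let e2 : (⨁ i : ι, ZMod (pp i ^ ee i)) ≃+ (∀ i : ι, ZMod (pp i ^ ee i)) :=
    { DFinsupp.equivFunOnFintype with
      map_add' := fun f g => funext fun i => by
        simp [DFinsupp.equivFunOnFintype] }
  let e3 : (∀ i : ι, ZMod (pp i ^ ee i)) ≃+ (∀ j : Fin r, ZMod (q j)) :=
    { Equiv.piCongrLeft' (fun i => ZMod (pp i ^ ee i)) eι with
      map_add' := fun f g => rfl }
  let eAll : G ≃+ (∀ j : Fin r, ZMod (q j)) := (eG.trans e2).trans e3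
  have hcards : Fintype.card G = ∏ j, q j := by
    rw [Fintype.card_congr eAll.toEquiv, Fintype.card_pi]
    exact Finset.prod_congr rfl fun j _ => ZMod.card _
  have hoddj : ∀ j, Odd (q j) := by
    intro j
    rcases Nat.even_or_odd (q j) with he | ho
    · exfalso
      obtain ⟨c, hc⟩ := he
      have h2 : (2 : ℕ) ∣ q j := ⟨c, by omega⟩
      have h3 : (2 : ℕ) ∣ Fintype.card G :=
        h2.trans (hcards ▸ Finset.dvd_prod_of_mem q (Finset.mem_univ j))
      obtain ⟨d, hd⟩ := h3
      obtain ⟨d', hd'⟩ := hodd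
      omega
    · exact ho
  have hppj : ∀ j, ∃ p e : ℕ, p.Prime ∧ q j = p ^ e :=
    fun j => ⟨pp (eι.symm j), ee (eι.symm j), hpp _, rfl⟩
  exact (goodFam_pi r q hoddj hppj).transfer eAll.symm

end main

/-- **Disjoint complete mappings of odd abelian groups.**
If `G` is a finite abelian group of odd order `n`, then there exist `n`
pairwise disjoint complete mappings of `G`, of which at least `φ(n)` are
cyclic permutations (a permutation is cyclic if some element's forward orbit
covers the whole group). -/
theorem disjoint_complete_mappings_of_odd_abelian
    (G : Type*) [AddCommGroup G] [Fintype G]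
    (hodd : Odd (Fintype.card G)) :
    ∃ σ : Fin (Fintype.card G) → Equiv.Perm G,
      (∀ i, Function.Bijective (fun g : G => g + σ i g)) ∧
      (∀ i j, i ≠ j → ∀ g : G, σ i g ≠ σ j g) ∧
      ∃ S : Finset (Fin (Fintype.card G)),
        Nat.totient (Fintype.card G) ≤ S.card ∧
        ∀ i ∈ S, ∃ x : G, ∀ y : G, ∃ k : ℕ, ((σ i) ^ k) x = y := by
  classical
  obtain ⟨σ, hcomp, hdis, S, hS, hcyc⟩ := goodFam_of_odd G hodd
  set e0 : G ≃ Fin (Fintype.card G) := Fintype.equivFin G with he0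
  refine ⟨fun i => σ (e0.symm i), fun i => hcomp _, ?_, S.image e0, ?_, ?_⟩
  · intro i j hij g
    exact hdis _ _ (fun hh => hij (by simpa using congrArg e0 hh)) g
  · rw [Finset.card_image_of_injective _ e0.injective]
    exact hS
  · intro i hi
    obtain ⟨g, hg, rfl⟩ := Finset.mem_image.mp hi
    simp only [Equiv.symm_apply_apply]
    exact hcyc g hg
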